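/- arXiv:1706.09681 — 2 statements merged into one kernel-verified Lean document; each statement's English description precedes it below -/
import Mathlib

section
/- (Theorem 2.2, first identity) For λ ∈ ℝ, r a nonnegative integer, every nonnegative integer n, and every real x, the degenerate falling factorial satisfies (x+r | λ)_n = Σ_{k=0}^{n} S_{2,r}(n+r, k+r | λ) (x)_k, where (x)_k = x(x−1)⋯(x−k+1) is the usual falling factorial. -/
open Finset

/-- The degenerate falling factorial `(x|λ)_n = x(x-λ)(x-2λ)⋯(x-(n-1)λ)`. -/
noncomputable def degFall (x lam : ℝ) (n : ℕ) : ℝ := ∏ i ∈ Finset.range n, (x - i * lam)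

/-- The formal power series `(1+λt)^{y/λ} = Σ_{m=0}^∞ (y|λ)_m t^m/m!`. -/
noncomputable def degExp (lam y : ℝ) : PowerSeries ℝ :=
  PowerSeries.mk fun m => degFall y lam m / m.factorial

/-- The degenerate Stirling numbers of the second kind `S_{2,λ}(n,k)`, defined by
`(1/k!)((1+λt)^{1/λ} - 1)^k = Σ_{n=k}^∞ S_{2,λ}(n,k) t^n/n!`. -/
noncomputable def degStirling2 (lam : ℝ) (n k : ℕ) : ℝ :=
  (n.factorial : ℝ) *
    PowerSeries.coeff n (((k.factorial : ℝ))⁻¹ • (degExp lam 1 - 1) ^ k)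

/-- The extended degenerate Stirling numbers of the second kind `S_{2,r}(n+r,k+r|λ)`,
defined by `(1/k!)(1+λt)^{r/λ}((1+λt)^{1/λ} - 1)^k = Σ_{n=k}^∞ S_{2,r}(n+r,k+r|λ) t^n/n!`. -/
noncomputable def extDegStirling2 (lam : ℝ) (r n k : ℕ) : ℝ :=
  (n.factorial : ℝ) *
    PowerSeries.coeff n
      (((k.factorial : ℝ))⁻¹ • (degExp lam r * (degExp lam 1 - 1) ^ k))

/-- The exponential `e^f = Σ_{k=0}^∞ f^k / k!` of a formal power series, computed
coefficientwise (the coefficientwise sums converge when `f` has zero constant term). -/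
noncomputable def expComp (f : PowerSeries ℝ) : PowerSeries ℝ :=
  PowerSeries.mk fun n => ∑' k : ℕ, PowerSeries.coeff n (f ^ k) / k.factorial

/-- The degenerate Bell polynomials, defined by
`e^{x((1+λt)^{1/λ} - 1)} = Σ_{n=0}^∞ Bel_{n,λ}(x) t^n/n!`. -/
noncomputable def degBell (lam x : ℝ) (n : ℕ) : ℝ :=
  (n.factorial : ℝ) * PowerSeries.coeff n (expComp (x • (degExp lam 1 - 1)))

/-- The extended degenerate Bell polynomials, defined by
`(1+λt)^{r/λ} e^{x((1+λt)^{1/λ} - 1)} = Σ_{n=0}^∞ Bel^{(r)}_{n,λ}(x) t^n/n!`. -/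
noncomputable def extDegBell (lam : ℝ) (r : ℕ) (x : ℝ) (n : ℕ) : ℝ :=
  (n.factorial : ℝ) *
    PowerSeries.coeff n (degExp lam r * expComp (x • (degExp lam 1 - 1)))

/-- The signed Stirling numbers of the first kind `S_1(n,k)`, defined by
`(x)_n = x(x-1)⋯(x-n+1) = Σ_{k=0}^n S_1(n,k) x^k`. -/
noncomputable def stirling1 (n k : ℕ) : ℝ :=
  (∏ i ∈ Finset.range n, (Polynomial.X - Polynomial.C (i : ℝ))).coeff k

/-- The Stirling numbers of the second kind, defined by
`(1/k!)(e^t - 1)^k = Σ_{n=k}^∞ S_2(n,k) t^n/n!`. -/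
noncomputable def stirling2 (n k : ℕ) : ℝ :=
  (n.factorial : ℝ) *
    PowerSeries.coeff n (((k.factorial : ℝ))⁻¹ • (PowerSeries.exp ℝ - 1) ^ k)

/-- The r-Stirling numbers of the second kind `S_{2,r}(n+r,k+r)`, defined by
`e^{rt}(1/k!)(e^t - 1)^k = Σ_{n=0}^∞ S_{2,r}(n+r,k+r) t^n/n!`. -/
noncomputable def rStirling2 (r n k : ℕ) : ℝ :=
  (n.factorial : ℝ) *
    PowerSeries.coeff n
      (PowerSeries.rescale (r : ℝ) (PowerSeries.exp ℝ) *
        ((k.factorial : ℝ))⁻¹ • (PowerSeries.exp ℝ - 1) ^ k)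

/-- The ordinary falling factorial `(x)_k = x(x-1)⋯(x-k+1)`. -/
noncomputable def fallFact (x : ℝ) (k : ℕ) : ℝ := ∏ i ∈ Finset.range k, (x - i)

lemma degFall_succ (x lam : ℝ) (n : ℕ) :
    degFall x lam (n+1) = degFall x lam n * (x - n*lam) := Finset.prod_range_succ _ _

lemma degFall_vandermonde (lam x y : ℝ) (n : ℕ) :
    degFall (x + y) lam n
      = ∑ k ∈ range (n+1), (n.choose k : ℝ) * (degFall x lam k * degFall y lam (n-k)) := by
  induction n with
  | zero => simp [degFall]
  | succ n ih =>
    rw [degFall_succ, ih, Finset.sum_mul]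
    have key : ∀ k ∈ range (n+1),
        (n.choose k : ℝ) * (degFall x lam k * degFall y lam (n-k)) * (x + y - n*lam)
        = (n.choose k : ℝ) * (degFall x lam (k+1) * degFall y lam (n-k))
          + (n.choose k : ℝ) * (degFall x lam k * degFall y lam (n-k+1)) := by
      intro k hk
      have hk' : k ≤ n := Nat.lt_succ_iff.mp (mem_range.mp hk)
      rw [degFall_succ, degFall_succ]
      have hc : ((n-k:ℕ):ℝ) = (n:ℝ) - k := Nat.cast_sub hk'
      have h2 : (x + y - n*lam) = (x - k*lam) + (y - ((n-k:ℕ):ℝ)*lam) := by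
        rw [hc]; ring
      rw [h2]; ring
    rw [Finset.sum_congr rfl key, Finset.sum_add_distrib]
    -- target: = ∑ k ∈ range (n+2), C(n+1,k) a_k b_(n+1-k)
    rw [Finset.sum_range_succ' (fun k => (((n+1).choose k : ℕ) : ℝ) *
      (degFall x lam k * degFall y lam (n+1-k)))]
    have e1 : ∑ k ∈ range (n+1), (n.choose k : ℝ) * (degFall x lam k * degFall y lam (n-k+1))
        = (∑ k ∈ range n, ((n.choose (k+1) : ℕ) : ℝ) *
            (degFall x lam (k+1) * degFall y lam (n-(k+1)+1))) + degFall y lam (n+1) := by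
      rw [Finset.sum_range_succ' (fun k => (n.choose k : ℝ) *
        (degFall x lam k * degFall y lam (n-k+1)))]
      simp [degFall]
    rw [e1]
    have e2 : ∀ k ∈ range (n+1), (((n+1).choose (k+1) : ℕ) : ℝ) *
        (degFall x lam (k+1) * degFall y lam (n+1-(k+1)))
        = (n.choose k : ℝ) * (degFall x lam (k+1) * degFall y lam (n-k))
          + ((n.choose (k+1) : ℕ) : ℝ) * (degFall x lam (k+1) * degFall y lam (n-k)) := by
      intro k hk
      rw [Nat.choose_succ_succ, Nat.cast_add, add_mul, Nat.succ_sub_succ]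
    rw [Finset.sum_congr rfl e2, Finset.sum_add_distrib]
    have e3 : ∑ k ∈ range (n+1), ((n.choose (k+1) : ℕ) : ℝ) *
        (degFall x lam (k+1) * degFall y lam (n-k))
        = ∑ k ∈ range n, ((n.choose (k+1) : ℕ) : ℝ) *
            (degFall x lam (k+1) * degFall y lam (n-(k+1)+1)) := by
      rw [Finset.sum_range_succ]
      simp only [Nat.choose_succ_self, Nat.cast_zero, zero_mul, add_zero]
      apply Finset.sum_congr rfl
      intro k hk
      have hk' : k < n := mem_range.mp hk
      have h2 : n - k = n - (k+1) + 1 := by omega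
      rw [h2]
    rw [e3]
    simp [degFall]
    ring

lemma degExp_add (lam x y : ℝ) : degExp lam (x + y) = degExp lam x * degExp lam y := by
  ext n
  rw [PowerSeries.coeff_mul, Finset.Nat.sum_antidiagonal_eq_sum_range_succ_mk]
  simp only [degExp, PowerSeries.coeff_mk]
  rw [degFall_vandermonde, Finset.sum_div]
  apply Finset.sum_congr rfl
  intro k hk
  have hk' : k ≤ n := Nat.lt_succ_iff.mp (mem_range.mp hk)
  rw [Nat.cast_choose ℝ hk']
  have h1 : (k.factorial : ℝ) ≠ 0 := Nat.cast_ne_zero.mpr (Nat.factorial_ne_zero _)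
  have h2 : ((n-k).factorial : ℝ) ≠ 0 := Nat.cast_ne_zero.mpr (Nat.factorial_ne_zero _)
  have h3 : (n.factorial : ℝ) ≠ 0 := Nat.cast_ne_zero.mpr (Nat.factorial_ne_zero _)
  field_simp

lemma degExp_zero (lam : ℝ) : degExp lam 0 = 1 := by
  ext n
  cases n with
  | zero => simp [degExp, degFall]
  | succ n =>
    have : degFall 0 lam (n+1) = 0 := by
      apply Finset.prod_eq_zero (Finset.mem_range.mpr (Nat.succ_pos n))
      simp
    simp [degExp, this]

lemma degExp_natCast (lam : ℝ) (m : ℕ) : degExp lam (m : ℝ) = (degExp lam 1) ^ m := by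
  induction m with
  | zero => simpa using degExp_zero lam
  | succ m ih =>
    have : ((m+1 : ℕ) : ℝ) = (m : ℝ) + 1 := by push_cast; ring
    rw [this, degExp_add, ih, pow_succ]

lemma coeff_mul_pow_eq_zero (g f : PowerSeries ℝ)
    (hf : PowerSeries.constantCoeff f = 0) {n k : ℕ} (h : n < k) :
    PowerSeries.coeff n (g * f ^ k) = 0 := by
  obtain ⟨w, rfl⟩ := (PowerSeries.X_dvd_iff).mpr hf
  have : g * (PowerSeries.X * w) ^ k = PowerSeries.X ^ k * (g * w ^ k) := by ring
  rw [this, PowerSeries.coeff_mul]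
  apply Finset.sum_eq_zero
  intro p hp
  have hp1 : p.1 ≤ n := by
    have := Finset.HasAntidiagonal.mem_antidiagonal.mp hp; omega
  rw [PowerSeries.coeff_X_pow, if_neg (by omega)]
  simp

lemma fallFact_nat (m k : ℕ) : fallFact (m : ℝ) k = (m.descFactorial k : ℝ) := by
  rcases le_or_gt k m with hkm | hkm
  · rw [Nat.descFactorial_eq_prod_range, fallFact, Nat.cast_prod]
    apply Finset.prod_congr rfl
    intro i hi
    have : i ≤ m := le_trans (Nat.le_of_lt_succ (Nat.lt_succ_of_lt (mem_range.mp hi))) (by omega)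
    rw [Nat.cast_sub this]
  · rw [Nat.descFactorial_eq_zero_iff_lt.mpr hkm]
    have hm : m ∈ range k := mem_range.mpr hkm
    simp only [Nat.cast_zero]
    exact Finset.prod_eq_zero hm (by simp)

lemma fallFact_nat_choose (m k : ℕ) :
    fallFact (m : ℝ) k = (k.factorial : ℝ) * (m.choose k : ℝ) := by
  rw [fallFact_nat, Nat.descFactorial_eq_factorial_mul_choose]
  push_cast; ring

lemma degFall_add_nat_key (lam : ℝ) (r n m : ℕ) :
    degFall ((m : ℝ) + r) lam n =
      ∑ k ∈ Finset.range (n + 1), extDegStirling2 lam r n k * fallFact (m : ℝ) k := by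
  set E := degExp lam 1 with hE
  have hconst : PowerSeries.constantCoeff (E - 1) = 0 := by
    simp [hE, degExp, ← PowerSeries.coeff_zero_eq_constantCoeff, degFall]
  set S : ℕ → ℝ := fun j => PowerSeries.coeff n (degExp lam r * (E - 1) ^ j) with hS
  -- LHS as coefficient
  have hfac : (n.factorial : ℝ) ≠ 0 := Nat.cast_ne_zero.mpr (Nat.factorial_ne_zero _)
  have hL : degFall ((m : ℝ) + r) lam n
      = (n.factorial : ℝ) * PowerSeries.coeff n (degExp lam ((m : ℝ) + r)) := by
    simp only [degExp, PowerSeries.coeff_mk]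
    field_simp
  have hsplit : degExp lam ((m : ℝ) + r) = degExp lam r * E ^ m := by
    rw [degExp_add, degExp_natCast, mul_comm]
  have hEpow : E ^ m = ∑ j ∈ range (m + 1), (E - 1) ^ j * 1 ^ (m - j) * (m.choose j : PowerSeries ℝ) := by
    rw [← add_pow, sub_add_cancel]
  have hcoeff : PowerSeries.coeff n (degExp lam r * E ^ m)
      = ∑ j ∈ range (m + 1), S j * (m.choose j : ℝ) := by
    rw [hEpow, Finset.mul_sum, map_sum]
    apply Finset.sum_congr rfl
    intro j hj
    rw [one_pow, mul_one]
    have : (m.choose j : PowerSeries ℝ) = PowerSeries.C ((m.choose j : ℝ)) := by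
      rw [← map_natCast (PowerSeries.C)]
    rw [this, ← mul_assoc, PowerSeries.coeff_mul_C]
  -- unified sum bound
  set N := max m n with hN
  have hLHS : degFall ((m : ℝ) + r) lam n
      = ∑ k ∈ range (N + 1), (n.factorial : ℝ) * ((k.factorial : ℝ))⁻¹ * S k * fallFact (m : ℝ) k := by
    rw [hL, hsplit, hcoeff, Finset.mul_sum]
    rw [← Finset.sum_subset (Finset.range_subset_range.mpr (by omega : m + 1 ≤ N + 1))
      (fun k _ hk => by
        have : m < k := by simp only [mem_range] at hk ⊢; omega
        rw [fallFact_nat_choose, Nat.choose_eq_zero_of_lt this]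
        simp)]
    apply Finset.sum_congr rfl
    intro k hk
    have hkf : (k.factorial : ℝ) ≠ 0 := Nat.cast_ne_zero.mpr (Nat.factorial_ne_zero _)
    rw [fallFact_nat_choose]
    field_simp
  rw [hLHS]
  rw [← Finset.sum_subset (Finset.range_subset_range.mpr (by omega : n + 1 ≤ N + 1))
    (fun k _ hk => by
      have hnk : n < k := by simp only [mem_range] at hk ⊢; omega
      have : S k = 0 := coeff_mul_pow_eq_zero _ _ hconst hnk
      rw [this]; ring_nf)]
  apply Finset.sum_congr rfl
  intro k hk
  rw [extDegStirling2]
  rw [PowerSeries.coeff_smul, smul_eq_mul]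
  ring


theorem degFall_add_eq_sum_extDegStirling2 (lam : ℝ) (r : ℕ) (n : ℕ) (x : ℝ) :
    degFall (x + r) lam n =
      ∑ k ∈ Finset.range (n + 1), extDegStirling2 lam r n k * fallFact x k := by
  set P : Polynomial ℝ := ∏ i ∈ range n, (Polynomial.X + Polynomial.C ((r : ℝ) - i * lam)) with hPdef
  set Q : Polynomial ℝ := ∑ k ∈ range (n + 1),
      Polynomial.C (extDegStirling2 lam r n k) * ∏ i ∈ range k, (Polynomial.X - Polynomial.C (i : ℝ)) with hQdef
  have hP : ∀ y : ℝ, P.eval y = degFall (y + r) lam n := by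
    intro y
    rw [hPdef, Polynomial.eval_prod, degFall]
    apply Finset.prod_congr rfl
    intro i _
    simp
    ring
  have hQ : ∀ y : ℝ, Q.eval y = ∑ k ∈ range (n + 1), extDegStirling2 lam r n k * fallFact y k := by
    intro y
    rw [hQdef, Polynomial.eval_finset_sum]
    apply Finset.sum_congr rfl
    intro k _
    rw [Polynomial.eval_mul, Polynomial.eval_C, Polynomial.eval_prod, fallFact]
    congr 1
    apply Finset.prod_congr rfl
    intro i _
    simp
  have hPQ : P = Q := by
    have hroot : ∀ m : ℕ, (P - Q).IsRoot (m : ℝ) := by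
      intro m
      simp only [Polynomial.IsRoot, Polynomial.eval_sub, hP, hQ]
      rw [degFall_add_nat_key lam r n m]
      ring
    have hinf : {y : ℝ | (P - Q).IsRoot y}.Infinite := by
      apply Set.Infinite.mono (s := Set.range (Nat.cast : ℕ → ℝ))
      · rintro _ ⟨m, rfl⟩
        exact hroot m
      · exact Set.infinite_range_of_injective Nat.cast_injective
    have := Polynomial.eq_zero_of_infinite_isRoot (P - Q) hinf
    exact sub_eq_zero.mp this
  rw [← hP x, hPQ, hQ]
end

section
/- (Theorem 2.3, second identity) For λ ∈ ℝ, r a nonnegative integer, every nonnegative integer n, and every real x, the extended degenerate Bell polynomial satisfies Bel^{(r)}_{n,λ}(x) = Σ_{k=0}^{n} ( Σ_{m=k}^{n} Σ_{l=0}^{n−m} C(n,m) r^l λ^{n−m−l} S_1(n−m, l) S_{2,λ}(m, k) ) x^k. -/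
open Finset

lemma natDegree_prodXC (j : ℕ) :
    (∏ i ∈ Finset.range j, (Polynomial.X - Polynomial.C (i:ℝ))).natDegree = j := by
  rw [Polynomial.natDegree_prod_of_monic]
  · simp only [Polynomial.natDegree_X_sub_C]
    simp
  · intro i _; exact Polynomial.monic_X_sub_C _

lemma degFall_eq_sum (y lam : ℝ) (j : ℕ) :
    degFall y lam j = ∑ l ∈ Finset.range (j+1), stirling1 j l * y ^ l * lam ^ (j - l) := by
  set P := ∏ i ∈ Finset.range j, (Polynomial.X - Polynomial.C (i:ℝ)) with hP
  have hdeg : P.natDegree = j := natDegree_prodXC j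
  by_cases hl : lam = 0
  · subst hl
    have h0 : degFall y 0 j = y ^ j := by simp [degFall]
    rw [h0, Finset.sum_eq_single_of_mem j (Finset.self_mem_range_succ j)]
    · have hmonic : P.Monic :=
        Polynomial.monic_prod_of_monic _ _ (fun i _ => Polynomial.monic_X_sub_C _)
      have h1 : stirling1 j j = 1 := by
        have := hmonic.coeff_natDegree
        rw [hdeg] at this
        rw [stirling1, ← hP]; exact this
      simp [h1]
    · intro l hl1 hl2
      have : j - l ≠ 0 := by
        have := Finset.mem_range.mp hl1; omega
      simp [zero_pow this]
  · have h1 : degFall y lam j = lam ^ j * P.eval (y / lam) := by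
      rw [Polynomial.eval_prod]
      rw [show lam ^ j = ∏ _i ∈ Finset.range j, lam by simp]
      rw [← Finset.prod_mul_distrib]
      unfold degFall
      refine Finset.prod_congr rfl fun i _ => ?_
      simp only [Polynomial.eval_sub, Polynomial.eval_X, Polynomial.eval_C]
      field_simp
    rw [h1, Polynomial.eval_eq_sum_range' (by omega : P.natDegree < j + 1), Finset.mul_sum]
    refine Finset.sum_congr rfl fun l hl1 => ?_
    have hle : l ≤ j := Nat.lt_succ_iff.mp (Finset.mem_range.mp hl1)
    have hpow : lam ^ (j - l) * lam ^ l = lam ^ j := pow_sub_mul_pow lam hle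
    rw [stirling1, ← hP, div_pow, ← hpow]
    field_simp

lemma coeff_degExp (lam y : ℝ) (j : ℕ) :
    PowerSeries.coeff j (degExp lam y) = degFall y lam j / j.factorial := by
  simp [degExp]

lemma constCoeff_E (lam : ℝ) : PowerSeries.constantCoeff (degExp lam 1 - 1) = 0 := by
  have h : PowerSeries.constantCoeff (degExp lam 1) = 1 := by
    rw [← PowerSeries.coeff_zero_eq_constantCoeff_apply]
    simp [degExp, degFall]
  simp [h]

lemma coeff_pow_E (lam : ℝ) {m k : ℕ} (h : m < k) :
    PowerSeries.coeff m ((degExp lam 1 - 1) ^ k) = 0 := by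
  obtain ⟨g, hg⟩ := PowerSeries.X_dvd_iff.mpr (constCoeff_E lam)
  rw [hg, mul_pow, PowerSeries.coeff_X_pow_mul', if_neg (by omega)]

lemma fact_mul_coeff_expComp (lam x : ℝ) (m : ℕ) :
    (m.factorial : ℝ) * PowerSeries.coeff m (expComp (x • (degExp lam 1 - 1))) =
      ∑ k ∈ Finset.range (m + 1), degStirling2 lam m k * x ^ k := by
  have h1 : PowerSeries.coeff m (expComp (x • (degExp lam 1 - 1))) =
      ∑ k ∈ Finset.range (m + 1),
        (PowerSeries.coeff m ((x • (degExp lam 1 - 1)) ^ k) : ℝ) / k.factorial := by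
    rw [expComp, PowerSeries.coeff_mk]
    refine tsum_eq_sum fun k hk => ?_
    have hk' : m < k := by
      simp only [Finset.mem_range, not_lt] at hk; omega
    rw [smul_pow, map_smul, smul_eq_mul, coeff_pow_E lam hk', mul_zero, zero_div]
  rw [h1, Finset.mul_sum]
  refine Finset.sum_congr rfl fun k _ => ?_
  rw [smul_pow, map_smul, smul_eq_mul, degStirling2, map_smul, smul_eq_mul]
  have hk : (k.factorial:ℝ) ≠ 0 := Nat.cast_ne_zero.mpr k.factorial_ne_zero
  field_simp
theorem extDegBell_eq_sum (lam : ℝ) (r : ℕ) (n : ℕ) (x : ℝ) :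
    extDegBell lam r x n =
      ∑ k ∈ Finset.range (n + 1),
        (∑ m ∈ Finset.Icc k n, ∑ l ∈ Finset.range (n - m + 1),
          (n.choose m : ℝ) * (r : ℝ) ^ l * lam ^ (n - m - l) * stirling1 (n - m) l *
            degStirling2 lam m k) * x ^ k := by
  have hfac : ∀ j : ℕ, ((j.factorial : ℝ)) ≠ 0 :=
    fun j => Nat.cast_ne_zero.mpr j.factorial_ne_zero
  have hRHS : ∀ k m : ℕ,
      (∑ l ∈ Finset.range (n - m + 1),
        (n.choose m : ℝ) * (r:ℝ)^l * lam^(n-m-l) * stirling1 (n-m) l * degStirling2 lam m k)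
      = (n.choose m : ℝ) * degFall (r:ℝ) lam (n-m) * degStirling2 lam m k := by
    intro k m
    rw [degFall_eq_sum, Finset.mul_sum, Finset.sum_mul]
    exact Finset.sum_congr rfl fun l _ => by ring
  rw [extDegBell, PowerSeries.coeff_mul, Finset.Nat.sum_antidiagonal_eq_sum_range_succ_mk]
  rw [← Finset.sum_range_reflect, Finset.mul_sum]
  have key : ∀ m ∈ Finset.range (n+1),
      (n.factorial:ℝ) *
        (PowerSeries.coeff (n + 1 - 1 - m) (degExp lam ↑r) *
         PowerSeries.coeff (n - (n + 1 - 1 - m)) (expComp (x • (degExp lam 1 - 1)))) =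
      ∑ k ∈ Finset.range (m+1),
        (n.choose m : ℝ) * degFall (r:ℝ) lam (n-m) * degStirling2 lam m k * x^k := by
    intro m hm
    have hm' : m ≤ n := Nat.lt_succ_iff.mp (Finset.mem_range.mp hm)
    have e1 : n + 1 - 1 - m = n - m := by omega
    have e2 : n - (n - m) = m := Nat.sub_sub_self hm'
    rw [e1, e2, coeff_degExp]
    have hstep : (n.factorial:ℝ) *
        (degFall (↑r) lam (n-m) / (n-m).factorial *
          PowerSeries.coeff m (expComp (x • (degExp lam 1 - 1)))) =
        (n.choose m : ℝ) * degFall (↑r) lam (n-m) *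
          ((m.factorial:ℝ) * PowerSeries.coeff m (expComp (x • (degExp lam 1 - 1)))) := by
      rw [Nat.cast_choose ℝ hm']
      field_simp
    rw [hstep, fact_mul_coeff_expComp, Finset.mul_sum]
    exact Finset.sum_congr rfl fun k _ => by ring
  rw [Finset.sum_congr rfl key]
  rw [Finset.sum_comm' (s := Finset.range (n+1)) (t := fun m => Finset.range (m+1))
    (t' := Finset.range (n+1)) (s' := fun k => Finset.Icc k n)
    (by intro m k; simp only [Finset.mem_range, Finset.mem_Icc, Nat.lt_succ_iff]; omega)]
  refine Finset.sum_congr rfl fun k hk => ?_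
  rw [Finset.sum_mul]
  refine Finset.sum_congr rfl fun m hm => ?_
  rw [hRHS k m]
end
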